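/- Let g be a positive random variable with E[1/g] < ∞, and for integers m ≥ 1 define ν_m := (E[(1/g)^{1/m}])^m. Fix an integer t ≥ 2 and define L_s(x) := s · 2^{x/s} (ν_s ν_{s−1} ⋯ ν_1)^{1/s} − s ν_1 for integers s ≥ 1. Then for every real β, E_g[ min_{b ∈ ℝ} ( (2^b − 1)/g + L_{t−1}(β − b) ) ] = L_t(β). -/

import Mathlib

open MeasureTheory

/-- Fractional moment constant `ν_m := (E[(1/g)^{1/m}])^m` of the channel state `g`. -/
noncomputable def nuM {Ω : Type*} [MeasurableSpace Ω] (μ : Measure Ω) (g : Ω → ℝ)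
    (m : ℕ) : ℝ :=
  (∫ ω, (1 / g ω) ^ ((1 : ℝ) / (m : ℝ)) ∂μ) ^ (m : ℝ)

/-- Cost-to-go function of the relaxed problem:
`L_s(x) = s · 2^{x/s} (ν_s ν_{s−1} ⋯ ν₁)^{1/s} − s ν₁`. -/
noncomputable def Lrelax {Ω : Type*} [MeasurableSpace Ω] (μ : Measure Ω) (g : Ω → ℝ)
    (s : ℕ) (x : ℝ) : ℝ :=
  (s : ℝ) * (2 : ℝ) ^ (x / (s : ℝ)) * (∏ i ∈ Finset.Icc 1 s, nuM μ g i) ^ ((1 : ℝ) / (s : ℝ))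
    - (s : ℝ) * nuM μ g 1

open Real in
/-- Key deterministic fact: the inner optimization has an explicit least value. -/
lemma key_isLeast (S C G β D : ℝ) (hS : 0 < S) (hC : 0 < C) (hG : 0 < G) :
    IsLeast (Set.range fun b : ℝ =>
        ((2 : ℝ) ^ b - 1) / G + (S * (2 : ℝ) ^ ((β - b) / S) * C - D))
      ((S + 1) * (2 : ℝ) ^ (β / (S + 1)) * C ^ (S / (S + 1)) * (1 / G) ^ (1 / (S + 1))
        - 1 / G - D) := by
  have hS1 : (0 : ℝ) < S + 1 := by linarith
  have hSne : S ≠ 0 := ne_of_gt hS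
  have hS1ne : S + 1 ≠ 0 := ne_of_gt hS1
  have hlog2 : Real.log 2 ≠ 0 := ne_of_gt (Real.log_pos one_lt_two)
  have e2 : ∀ x : ℝ, (2 : ℝ) ^ x = Real.exp (Real.log 2 * x) :=
    fun x => Real.rpow_def_of_pos two_pos x
  have erp : ∀ x y : ℝ, Real.exp x ^ y = Real.exp (x * y) :=
    fun x y => by rw [Real.rpow_def_of_pos (Real.exp_pos x), Real.log_exp]
  -- the claimed least value, written as an exponential
  have hMexp : (2 : ℝ) ^ (β / (S + 1)) * C ^ (S / (S + 1)) * (1 / G) ^ (1 / (S + 1))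
      = Real.exp (Real.log 2 * (β / (S + 1)) + Real.log C * (S / (S + 1))
          + (-Real.log G) * (1 / (S + 1))) := by
    rw [e2, Real.rpow_def_of_pos hC, Real.rpow_def_of_pos (by positivity : (0:ℝ) < 1 / G),
      one_div G, Real.log_inv, ← Real.exp_add, ← Real.exp_add]
  -- each candidate value in exponential form
  have hp1 : ∀ b : ℝ, (2 : ℝ) ^ b / G = Real.exp (Real.log 2 * b - Real.log G) := by
    intro b; rw [e2, Real.exp_sub, Real.exp_log hG]
  have hp2 : ∀ b : ℝ, (2 : ℝ) ^ ((β - b) / S) * C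
      = Real.exp (Real.log 2 * ((β - b) / S) + Real.log C) := by
    intro b; rw [e2, Real.exp_add, Real.exp_log hC]
  constructor
  · -- the least value is attained
    refine ⟨S / (S + 1) * Real.logb 2 (G * C * (2 : ℝ) ^ (β / S)), ?_⟩
    set b₀ : ℝ := S / (S + 1) * Real.logb 2 (G * C * (2 : ℝ) ^ (β / S)) with hb₀
    have hlogA : Real.log (G * C * (2 : ℝ) ^ (β / S))
        = Real.log G + Real.log C + Real.log 2 * (β / S) := by
      rw [Real.log_mul (by positivity) (by positivity),
        Real.log_mul (ne_of_gt hG) (ne_of_gt hC), Real.log_rpow two_pos, mul_comm (β / S)]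
    have hb₀' : b₀ = S / (S + 1) *
        ((Real.log G + Real.log C + Real.log 2 * (β / S)) / Real.log 2) := by
      rw [hb₀, Real.logb, hlogA]
    have hE : Real.log 2 * (β / (S + 1)) + Real.log C * (S / (S + 1))
        + (-Real.log G) * (1 / (S + 1)) = Real.log 2 * b₀ - Real.log G := by
      rw [hb₀']; field_simp; ring
    have hE2 : Real.log 2 * ((β - b₀) / S) + Real.log C
        = Real.log 2 * b₀ - Real.log G := by
      rw [hb₀']; field_simp; ring
    have h1 : (2 : ℝ) ^ b₀ / G = Real.exp (Real.log 2 * b₀ - Real.log G) := hp1 b₀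
    have h2 : (2 : ℝ) ^ ((β - b₀) / S) * C = Real.exp (Real.log 2 * b₀ - Real.log G) := by
      rw [hp2 b₀, hE2]
    have hM : (2 : ℝ) ^ (β / (S + 1)) * C ^ (S / (S + 1)) * (1 / G) ^ (1 / (S + 1))
        = Real.exp (Real.log 2 * b₀ - Real.log G) := by rw [hMexp, hE]
    beta_reduce
    have : ((2 : ℝ) ^ b₀ - 1) / G = (2 : ℝ) ^ b₀ / G - 1 / G := by ring
    rw [this, h1, mul_assoc S, h2, mul_assoc (S + 1), mul_assoc, hM]
    ring
  · -- lower bound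
    rintro v ⟨b, rfl⟩
    beta_reduce
    set p₁ : ℝ := (2 : ℝ) ^ b / G with hp₁def
    set p₂ : ℝ := (2 : ℝ) ^ ((β - b) / S) * C with hp₂def
    have hp₁pos : 0 < p₁ := by positivity
    have hp₂pos : 0 < p₂ := by positivity
    have hgm := Real.geom_mean_le_arith_mean2_weighted
      (by positivity : (0:ℝ) ≤ 1 / (S + 1)) (by positivity : (0:ℝ) ≤ S / (S + 1))
      hp₁pos.le hp₂pos.le (by field_simp; ring)
    have hprod : p₁ ^ (1 / (S + 1)) * p₂ ^ (S / (S + 1))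
        = (2 : ℝ) ^ (β / (S + 1)) * C ^ (S / (S + 1)) * (1 / G) ^ (1 / (S + 1)) := by
      rw [hp₁def, hp₂def, hp1 b, hp2 b, erp, erp, ← Real.exp_add, hMexp]
      congr 1
      field_simp
      ring
    rw [hprod] at hgm
    have hmul := mul_le_mul_of_nonneg_left hgm hS1.le
    have hrhs : (S + 1) * (1 / (S + 1) * p₁ + S / (S + 1) * p₂) = p₁ + S * p₂ := by
      field_simp
    rw [hrhs] at hmul
    have hexpand : ((2 : ℝ) ^ b - 1) / G + (S * (2 : ℝ) ^ ((β - b) / S) * C - D)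
        = p₁ + S * p₂ - 1 / G - D := by
      rw [hp₁def, hp₂def]; ring
    rw [hexpand]
    have : (S + 1) * (2 : ℝ) ^ (β / (S + 1)) * C ^ (S / (S + 1)) * (1 / G) ^ (1 / (S + 1))
        = (S + 1) * ((2 : ℝ) ^ (β / (S + 1)) * C ^ (S / (S + 1)) * (1 / G) ^ (1 / (S + 1))) := by
      ring
    rw [this]
    linarith

open Real in
lemma integrable_rpow_inv {Ω : Type*} [MeasurableSpace Ω] (μ : Measure Ω)
    [IsProbabilityMeasure μ] (g : Ω → ℝ) (hgpos : ∀ ω, 0 < g ω) (hgmeas : Measurable g)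
    (hint : Integrable (fun ω => 1 / g ω) μ) (r : ℝ) (hr0 : 0 ≤ r) (hr1 : r ≤ 1) :
    Integrable (fun ω => (1 / g ω) ^ r) μ := by
  have heq : (fun ω => (1 / g ω) ^ r)
      = fun ω => Real.exp (Real.log (1 / g ω) * r) := funext fun ω =>
    Real.rpow_def_of_pos (one_div_pos.mpr (hgpos ω)) r
  have hmeas : Measurable fun ω => (1 / g ω) ^ r := by
    rw [heq]
    exact Real.measurable_exp.comp
      ((Real.measurable_log.comp (measurable_const.div hgmeas)).mul measurable_const)
  have hbdd : Integrable (fun ω => 1 + 1 / g ω) μ := (integrable_const (1 : ℝ)).add hint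
  refine Integrable.mono' hbdd
    hmeas.aestronglyMeasurable (Filter.Eventually.of_forall fun ω => ?_)
  have hgw := hgpos ω
  have hx : 0 < 1 / g ω := by positivity
  rw [Real.norm_eq_abs, abs_of_nonneg (Real.rpow_nonneg hx.le r)]
  rcases le_or_gt (1 / g ω) 1 with h | h
  · calc (1 / g ω) ^ r ≤ 1 := Real.rpow_le_one hx.le h hr0
      _ ≤ 1 + 1 / g ω := by linarith
  · calc (1 / g ω) ^ r ≤ (1 / g ω) ^ (1 : ℝ) :=
        Real.rpow_le_rpow_of_exponent_le h.le hr1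
      _ = 1 / g ω := Real.rpow_one _
      _ ≤ 1 + 1 / g ω := by linarith

open Real in
lemma nuM_pos {Ω : Type*} [MeasurableSpace Ω] (μ : Measure Ω)
    [IsProbabilityMeasure μ] (g : Ω → ℝ) (hgpos : ∀ ω, 0 < g ω) (hgmeas : Measurable g)
    (hint : Integrable (fun ω => 1 / g ω) μ) (m : ℕ) (hm : 1 ≤ m) :
    0 < nuM μ g m := by
  have hm' : (0 : ℝ) < m := by exact_mod_cast hm
  have hr0 : (0 : ℝ) ≤ 1 / m := by positivity
  have hr1 : (1 : ℝ) / m ≤ 1 := by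
    rw [div_le_one hm']; exact_mod_cast hm
  have hInt := integrable_rpow_inv μ g hgpos hgmeas hint _ hr0 hr1
  have hIpos : 0 < ∫ ω, (1 / g ω) ^ ((1 : ℝ) / (m : ℝ)) ∂μ := by
    rw [integral_pos_iff_support_of_nonneg_ae
      (Filter.Eventually.of_forall fun ω => Real.rpow_nonneg (one_div_pos.mpr (hgpos ω)).le _) hInt]
    have hsupp : (Function.support fun ω => (1 / g ω) ^ ((1 : ℝ) / (m : ℝ))) = Set.univ :=
      Set.eq_univ_of_forall fun ω =>
        (Real.rpow_pos_of_pos (one_div_pos.mpr (hgpos ω)) _).ne'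
    rw [hsupp]
    simp
  exact Real.rpow_pos_of_pos hIpos _

/-- One step of the relaxed dynamic program: for `t ≥ 2` and any `β`,
`E_g[ min_{b ∈ ℝ} ( (2^b − 1)/g + L_{t−1}(β − b) ) ] = L_t(β)`. -/
theorem relaxed_cost_to_go_recursion {Ω : Type*} [MeasurableSpace Ω] (μ : Measure Ω)
    [IsProbabilityMeasure μ]
    (g : Ω → ℝ) (hgpos : ∀ ω, 0 < g ω) (hgmeas : Measurable g)
    (hint : Integrable (fun ω => 1 / g ω) μ)
    (t : ℕ) (ht : 2 ≤ t) (β : ℝ) :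
    ∫ ω, sInf (Set.range fun b : ℝ =>
        ((2 : ℝ) ^ b - 1) / g ω + Lrelax μ g (t - 1) (β - b)) ∂μ = Lrelax μ g t β := by
  obtain ⟨n, rfl⟩ : ∃ n, t = n + 1 := ⟨t - 1, by omega⟩
  have hn : 1 ≤ n := by omega
  have hSpos : (0 : ℝ) < (n : ℝ) := by exact_mod_cast hn
  set S : ℝ := (n : ℝ) with hSdef
  set P : ℝ := ∏ i ∈ Finset.Icc 1 n, nuM μ g i with hPdef
  have hPpos : 0 < P := by
    refine Finset.prod_pos fun i hi => ?_
    exact nuM_pos μ g hgpos hgmeas hint i (Finset.mem_Icc.mp hi).1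
  set C : ℝ := P ^ ((1 : ℝ) / S) with hCdef
  have hCpos : 0 < C := Real.rpow_pos_of_pos hPpos _
  set ν1 : ℝ := nuM μ g 1 with hν1def
  set D : ℝ := S * ν1 with hDdef
  have hS1 : (0 : ℝ) < S + 1 := by linarith
  -- pointwise value of the infimum
  have hpoint : ∀ ω, sInf (Set.range fun b : ℝ =>
      ((2 : ℝ) ^ b - 1) / g ω + Lrelax μ g (n + 1 - 1) (β - b))
      = (S + 1) * (2 : ℝ) ^ (β / (S + 1)) * C ^ (S / (S + 1))
          * (1 / g ω) ^ (1 / (S + 1)) - 1 / g ω - D := by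
    intro ω
    exact (key_isLeast S C (g ω) β D hSpos hCpos (hgpos ω)).csInf_eq
  rw [integral_congr_ae (Filter.Eventually.of_forall hpoint)]
  -- integrability facts
  have hr0 : (0 : ℝ) ≤ 1 / (S + 1) := by positivity
  have hr1 : 1 / (S + 1) ≤ 1 := by
    rw [div_le_one hS1]; linarith
  have hInt : Integrable (fun ω => (1 / g ω) ^ (1 / (S + 1))) μ :=
    integrable_rpow_inv μ g hgpos hgmeas hint _ hr0 hr1
  set K : ℝ := (S + 1) * (2 : ℝ) ^ (β / (S + 1)) * C ^ (S / (S + 1)) with hKdef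
  have hf2 : Integrable (fun ω => K * (1 / g ω) ^ (1 / (S + 1))) μ := hInt.const_mul K
  have hf1 : Integrable (fun ω => K * (1 / g ω) ^ (1 / (S + 1)) - 1 / g ω) μ := hf2.sub hint
  rw [integral_sub hf1 (integrable_const D), integral_sub hf2 hint, integral_const_mul,
    integral_const, probReal_univ, one_smul]
  -- value of the integrals
  have hI : ∫ ω, (1 / g ω) ^ (1 / (S + 1)) ∂μ = (nuM μ g (n + 1)) ^ (1 / (S + 1)) := by
    have hcast : ((n + 1 : ℕ) : ℝ) = S + 1 := by push_cast [hSdef]; ring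
    have hInn : (0 : ℝ) ≤ ∫ ω, (1 / g ω) ^ ((1 : ℝ) / (S + 1)) ∂μ :=
      integral_nonneg fun ω => Real.rpow_nonneg (one_div_pos.mpr (hgpos ω)).le _
    rw [nuM, hcast, ← Real.rpow_mul hInn, mul_one_div, div_self (ne_of_gt hS1),
      Real.rpow_one]
  have hν1 : ∫ ω, 1 / g ω ∂μ = ν1 := by
    simp only [hν1def, nuM, Nat.cast_one, div_one, Real.rpow_one]
  rw [hI, hν1]
  -- algebraic identification with `Lrelax (n+1) β`
  have hcast : ((n + 1 : ℕ) : ℝ) = S + 1 := by push_cast [hSdef]; ring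
  have hprodtop : (∏ i ∈ Finset.Icc 1 (n + 1), nuM μ g i) = P * nuM μ g (n + 1) := by
    rw [hPdef, Finset.prod_Icc_succ_top (by omega : 1 ≤ n + 1)]
  have hCpow : C ^ (S / (S + 1)) = P ^ (1 / (S + 1)) := by
    rw [hCdef, ← Real.rpow_mul hPpos.le]
    congr 1
    field_simp
  have hνpos : 0 < nuM μ g (n + 1) := nuM_pos μ g hgpos hgmeas hint (n + 1) (by omega)
  rw [Lrelax, hprodtop, hcast]
  rw [Real.mul_rpow hPpos.le hνpos.le]
  rw [hKdef, hCpow]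
  ring
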